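/- The quotient of U(g) by the two-sided ideal generated by the 2f elements e_j·f_j (0 ≤ j ≤ f−1) and h_j (0 ≤ j ≤ f−1) is isomorphic as an F-algebra to the quotient of the polynomial ring F[X_j, Y_j : 0 ≤ j ≤ f−1] by the ideal (X_j·Y_j : 0 ≤ j ≤ f−1), via e_j ↦ X_j and f_j ↦ Y_j. -/

import Mathlib

/-- The two-sided ideal generated by a set `s` in a (possibly noncommutative) ring,
realized as the left ideal generated by all elements `u * a * v` with `a ∈ s`. -/
def twoSidedSpan {R : Type*} [Ring R] (s : Set R) : Ideal R :=
  Ideal.span {x | ∃ a ∈ s, ∃ u v : R, x = u * a * v}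


section ProdHelpers
variable {M : Type*} [Monoid M] {ι : Type*}

lemma auxCommuteListProd (x : M) (l : List ι) (u : ι → M) (h : ∀ i ∈ l, Commute x (u i)) :
    Commute x (l.map u).prod :=
  Commute.list_prod_right _ _ (by
    intro y hy
    obtain ⟨i, hi, rfl⟩ := List.mem_map.mp hy
    exact h i hi)

lemma auxListProdPowAdd (u : ι → M) (hc : ∀ i j, Commute (u i) (u j)) (l : List ι)
    (a b : ι → ℕ) :
    (l.map fun i => u i ^ (a i + b i)).prod
      = (l.map fun i => u i ^ a i).prod * (l.map fun i => u i ^ b i).prod := by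
  induction l with
  | nil => simp
  | cons i l ih =>
    have hcomm : Commute (u i ^ b i) (l.map fun k => u k ^ a k).prod :=
      auxCommuteListProd _ _ _ (fun j _ => (hc i j).pow_pow _ _)
    rw [List.map_cons, List.map_cons, List.map_cons, List.prod_cons, List.prod_cons,
      List.prod_cons, ih, pow_add, mul_assoc, ← mul_assoc (u i ^ b i), hcomm.eq,
      mul_assoc ((l.map fun i => u i ^ a i).prod), ← mul_assoc]

lemma auxListProdPowSingle [DecidableEq ι] (u : ι → M) {l : List ι} (hl : l.Nodup)
    {j : ι} (hj : j ∈ l) (n : ℕ) :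
    (l.map fun i => u i ^ (if i = j then n else 0)).prod = u j ^ n := by
  induction l with
  | nil => simp at hj
  | cons i l ih =>
    obtain ⟨hil, hl'⟩ := List.nodup_cons.mp hl
    simp only [List.map_cons, List.prod_cons]
    rcases List.mem_cons.mp hj with rfl | hj'
    · have h1 : (l.map fun k => u k ^ (if k = j then n else 0)).prod = 1 :=
        List.prod_eq_one (by
          intro x hx
          obtain ⟨k, hk, rfl⟩ := List.mem_map.mp hx
          rw [if_neg (by rintro rfl; exact hil hk), pow_zero])
      rw [h1, if_pos rfl, mul_one]
    · have hne : i ≠ j := by rintro rfl; exact hil hj'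
      rw [if_neg hne, pow_zero, one_mul, ih hl' hj']

end ProdHelpers

section Abstract

variable {A : Type*} [Monoid A] {f : ℕ}

/-- ordered product `∏ E j ^ a j`. -/
def auxPE (E : Fin f → A) (a : Fin f → ℕ) : A :=
  ((List.finRange f).map fun j => E j ^ a j).prod

/-- the normal-form monomial `∏ E j ^ m (inl j) * ∏ Fv j ^ m (inr j)`. -/
def auxG (E Fv : Fin f → A) (m : (Fin f ⊕ Fin f) →₀ ℕ) : A :=
  auxPE E (fun j => m (Sum.inl j)) * auxPE Fv (fun j => m (Sum.inr j))

variable {E Fv H : Fin f → A}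

lemma auxPE_add (hEE : ∀ i j, Commute (E i) (E j)) (a b : Fin f → ℕ) :
    auxPE E (fun j => a j + b j) = auxPE E a * auxPE E b :=
  auxListProdPowAdd E hEE _ a b

lemma auxPE_single (j : Fin f) (n : ℕ) :
    auxPE E (fun i => if i = j then n else 0) = E j ^ n :=
  auxListProdPowSingle E (List.nodup_finRange f) (List.mem_finRange j) n

lemma auxCommute_PE {x : A} (a : Fin f → ℕ) (h : ∀ j, a j ≠ 0 → Commute x (E j)) :
    Commute x (auxPE E a) :=
  auxCommuteListProd x _ _ (fun j _ => by
    rcases Nat.eq_zero_or_pos (a j) with h0 | h0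
    · rw [h0, pow_zero]; exact Commute.one_right x
    · exact (h j (Nat.pos_iff_ne_zero.mp h0)).pow_right _)

lemma auxPE_zero : auxPE E (fun _ => 0) = 1 := by
  unfold auxPE
  exact List.prod_eq_one (by
    intro x hx
    obtain ⟨k, _, rfl⟩ := List.mem_map.mp hx
    exact pow_zero _)

lemma auxG_zero : auxG E Fv 0 = 1 := by
  unfold auxG
  have h0 : ∀ k : Fin f ⊕ Fin f, (0 : (Fin f ⊕ Fin f) →₀ ℕ) k = 0 := fun _ => rfl
  simp only [h0]
  rw [auxPE_zero, auxPE_zero, one_mul]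

/-- pull a single `E i` into the ordered product from the left. -/
lemma auxE_mul_PE (hEE : ∀ i j, Commute (E i) (E j)) (i : Fin f) (a : Fin f → ℕ) :
    E i * auxPE E a = auxPE E (fun j => (if j = i then 1 else 0) + a j) := by
  rw [auxPE_add hEE, auxPE_single i 1, pow_one]

lemma auxE_mul_G (hEE : ∀ i j, Commute (E i) (E j)) (i : Fin f)
    (m : (Fin f ⊕ Fin f) →₀ ℕ) :
    E i * auxG E Fv m = auxG E Fv (m + Finsupp.single (Sum.inl i) 1) := by
  unfold auxG
  rw [← mul_assoc, auxE_mul_PE hEE]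
  congr 1
  · congr 1
    funext j
    simp [Finsupp.single_apply, eq_comm, Nat.add_comm]
  · congr 1
    funext j
    simp [Finsupp.single_apply]

end Abstract

section AbstractJ

variable {A : Type*} [Ring A] {f : ℕ} {E Fv H : Fin f → A} {J : Ideal A}

lemma auxFv_mul_Epow (hJh : ∀ (j : Fin f) (u w : A), u * H j * w ∈ J)
    (hFE1 : ∀ j, Fv j * E j = E j * Fv j - H j) (i : Fin f) (n : ℕ) :
    ∃ w ∈ J, Fv i * E i ^ n = E i ^ n * Fv i + w := by
  induction n with
  | zero => exact ⟨0, J.zero_mem, by simp⟩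
  | succ n ih =>
    obtain ⟨w, hw, hrel⟩ := ih
    refine ⟨E i * w - H i * E i ^ n, ?_, ?_⟩
    · refine J.sub_mem (J.mul_mem_left _ hw) ?_
      have := hJh i 1 (E i ^ n); rwa [one_mul] at this
    · rw [pow_succ']
      calc Fv i * (E i * E i ^ n) = (Fv i * E i) * E i ^ n := by rw [mul_assoc]
        _ = (E i * Fv i - H i) * E i ^ n := by rw [hFE1]
        _ = E i * (Fv i * E i ^ n) - H i * E i ^ n := by rw [sub_mul, mul_assoc]
        _ = E i * (E i ^ n * Fv i + w) - H i * E i ^ n := by rw [hrel]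
        _ = E i * E i ^ n * Fv i + (E i * w - H i * E i ^ n) := by
            rw [mul_add, ← mul_assoc]; abel

lemma auxFv_mul_PE (hEE : ∀ i j, Commute (E i) (E j))
    (hEF' : ∀ i j, i ≠ j → Commute (E i) (Fv j))
    (hJh : ∀ (j : Fin f) (u w : A), u * H j * w ∈ J)
    (hFE1 : ∀ j, Fv j * E j = E j * Fv j - H j) (i : Fin f) (a : Fin f → ℕ) :
    ∃ w ∈ J, Fv i * auxPE E a = auxPE E a * Fv i + w := by
  classical
  set a' : Fin f → ℕ := fun k => if k = i then 0 else a k with ha'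
  have hsplit : a = fun k => a' k + (if k = i then a i else 0) := by
    funext k; by_cases hk : k = i <;> simp [ha', hk]
  have h1 : auxPE E a = auxPE E a' * E i ^ a i := by
    conv_lhs => rw [hsplit]
    rw [auxPE_add hEE, auxPE_single]
  have hcomm : Commute (Fv i) (auxPE E a') := by
    refine auxCommute_PE a' (fun j hj => ?_)
    have hji : j ≠ i := by intro hji; rw [hji] at hj; simp [ha'] at hj
    exact ((hEF' j i hji).symm)
  obtain ⟨w, hw, hrel⟩ := auxFv_mul_Epow (E := E) hJh hFE1 i (a i)
  refine ⟨auxPE E a' * w, J.mul_mem_left _ hw, ?_⟩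
  rw [h1, ← mul_assoc, hcomm.eq, mul_assoc, hrel, mul_add, ← mul_assoc]

lemma auxFv_mul_G (hEE : ∀ i j, Commute (E i) (E j))
    (hFF : ∀ i j, Commute (Fv i) (Fv j))
    (hEF' : ∀ i j, i ≠ j → Commute (E i) (Fv j))
    (hJh : ∀ (j : Fin f) (u w : A), u * H j * w ∈ J)
    (hJr : ∀ x ∈ J, ∀ r : A, x * r ∈ J)
    (hFE1 : ∀ j, Fv j * E j = E j * Fv j - H j) (i : Fin f)
    (m : (Fin f ⊕ Fin f) →₀ ℕ) :
    ∃ w ∈ J, Fv i * auxG E Fv m = auxG E Fv (m + Finsupp.single (Sum.inr i) 1) + w := by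
  classical
  unfold auxG
  obtain ⟨w, hw, hrel⟩ := auxFv_mul_PE (H := H) hEE hEF' hJh hFE1 i (fun j => m (Sum.inl j))
  refine ⟨w * auxPE Fv (fun j => m (Sum.inr j)), hJr w hw _, ?_⟩
  have h2 : Fv i * auxPE Fv (fun j => m (Sum.inr j))
      = auxPE Fv (fun j => ((m + Finsupp.single (Sum.inr i) 1 : (Fin f ⊕ Fin f) →₀ ℕ)) (Sum.inr j)) := by
    rw [auxE_mul_PE hFF]
    congr 1
    funext j
    simp [Finsupp.add_apply, Finsupp.single_apply, eq_comm, Nat.add_comm]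
  have h3 : auxPE E (fun j => ((m + Finsupp.single (Sum.inr i) 1 : (Fin f ⊕ Fin f) →₀ ℕ)) (Sum.inl j))
      = auxPE E (fun j => m (Sum.inl j)) := by
    congr 1
    funext j
    simp [Finsupp.add_apply, Finsupp.single_apply]
  rw [h3, ← mul_assoc, hrel, add_mul, mul_assoc, h2]

lemma auxG_mem (hEE : ∀ i j, Commute (E i) (E j))
    (hFF : ∀ i j, Commute (Fv i) (Fv j))
    (hJef : ∀ (j : Fin f) (u w : A), u * (E j * Fv j) * w ∈ J)
    (m : (Fin f ⊕ Fin f) →₀ ℕ) (j : Fin f)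
    (h1 : m (Sum.inl j) ≠ 0) (h2 : m (Sum.inr j) ≠ 0) :
    auxG E Fv m ∈ J := by
  classical
  have hPa : auxPE E (fun k => m (Sum.inl k))
      = auxPE E (fun k => if k = j then m (Sum.inl j) - 1 else m (Sum.inl k)) * E j := by
    have hs : (fun k => m (Sum.inl k))
        = fun k => (if k = j then m (Sum.inl j) - 1 else m (Sum.inl k)) + (if k = j then 1 else 0) := by
      funext k; by_cases hk : k = j
      · subst hk; simp; omega
      · simp [hk]
    rw [hs, auxPE_add hEE, auxPE_single, pow_one]
  have hPb : auxPE Fv (fun k => m (Sum.inr k))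
      = Fv j * auxPE Fv (fun k => if k = j then m (Sum.inr j) - 1 else m (Sum.inr k)) := by
    have hs : (fun k => m (Sum.inr k))
        = fun k => (if k = j then 1 else 0) + (if k = j then m (Sum.inr j) - 1 else m (Sum.inr k)) := by
      funext k; by_cases hk : k = j
      · subst hk; simp; omega
      · simp [hk]
    rw [hs, auxPE_add hFF, auxPE_single, pow_one]
  have hG : auxG E Fv m
      = auxPE E (fun k => if k = j then m (Sum.inl j) - 1 else m (Sum.inl k)) * (E j * Fv j) *
          auxPE Fv (fun k => if k = j then m (Sum.inr j) - 1 else m (Sum.inr k)) := by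
    unfold auxG
    rw [hPa, hPb, ← mul_assoc, ← mul_assoc, mul_assoc _ (E j) (Fv j)]
  rw [hG]
  exact hJef j _ _

lemma auxMap_PE {C G : Type*} [Monoid C] [FunLike G A C] [MonoidHomClass G A C]
    (Φ : G) (a : Fin f → ℕ) :
    Φ (auxPE E a) = auxPE (fun j => Φ (E j)) a := by
  unfold auxPE
  rw [map_list_prod, List.map_map]
  simp only [Function.comp_def, map_pow]

lemma auxPE_eq_prod {C : Type*} [CommMonoid C] (w : Fin f → C) (a : Fin f → ℕ) :
    auxPE w a = ∏ j, w j ^ a j :=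
  (Fin.prod_univ_def _).symm

end AbstractJ

attribute [local instance] LieRing.ofAssociativeRing


set_option maxHeartbeats 2000000 in
set_option synthInstance.maxHeartbeats 400000 in
/-- Let `g` be the Lie algebra over a field `F` with basis
`{e_j, f_j, h_j : 0 ≤ j ≤ f−1}` and only nonzero brackets `⁅e_j, f_j⁆ = h_j`
(a direct sum of `f` copies of the Heisenberg Lie algebra).  The quotient of `U(g)` by
the two-sided ideal generated by the `2f` elements `e_j·f_j` and `h_j` is isomorphic as
an `F`-algebra to `F[X_j, Y_j : 0 ≤ j ≤ f−1]/(X_j·Y_j : 0 ≤ j ≤ f−1)`, via `e_j ↦ X_j`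
and `f_j ↦ Y_j`. -/
theorem statement11 {F : Type*} [Field F] {f : ℕ} (hf : 1 ≤ f)
    {L : Type*} [LieRing L] [LieAlgebra F L]
    (e fv h : Fin f → L)
    (B : Module.Basis ((Fin f) ⊕ (Fin f) ⊕ (Fin f)) F L)
    (hBe : ∀ j, B (Sum.inl j) = e j)
    (hBf : ∀ j, B (Sum.inr (Sum.inl j)) = fv j)
    (hBh : ∀ j, B (Sum.inr (Sum.inr j)) = h j)
    (hef : ∀ j, ⁅e j, fv j⁆ = h j)
    (hef' : ∀ i j, i ≠ j → ⁅e i, fv j⁆ = 0)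
    (hee : ∀ i j, ⁅e i, e j⁆ = 0)
    (hff : ∀ i j, ⁅fv i, fv j⁆ = 0)
    (hhe : ∀ i j, ⁅h i, e j⁆ = 0)
    (hhf : ∀ i j, ⁅h i, fv j⁆ = 0)
    (hhh : ∀ i j, ⁅h i, h j⁆ = 0) :
    ∃ Φ : UniversalEnvelopingAlgebra F L →ₐ[F]
        (MvPolynomial ((Fin f) ⊕ (Fin f)) F ⧸
          Ideal.span (Set.range fun j : Fin f =>
            (MvPolynomial.X (Sum.inl j) : MvPolynomial ((Fin f) ⊕ (Fin f)) F) *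
              MvPolynomial.X (Sum.inr j))),
      Function.Surjective Φ ∧
      (∀ j, Φ (UniversalEnvelopingAlgebra.ι F (e j)) =
        Ideal.Quotient.mk _ (MvPolynomial.X (Sum.inl j))) ∧
      (∀ j, Φ (UniversalEnvelopingAlgebra.ι F (fv j)) =
        Ideal.Quotient.mk _ (MvPolynomial.X (Sum.inr j))) ∧
      RingHom.ker Φ.toRingHom =
        twoSidedSpan
          ((Set.range fun j : Fin f =>
              UniversalEnvelopingAlgebra.ι F (e j) * UniversalEnvelopingAlgebra.ι F (fv j)) ∪
            (Set.range fun j : Fin f => UniversalEnvelopingAlgebra.ι F (h j))) := by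
  classical
  let I : Ideal (MvPolynomial (Fin f ⊕ Fin f) F) :=
    Ideal.span (Set.range fun j : Fin f =>
      (MvPolynomial.X (Sum.inl j) : MvPolynomial ((Fin f) ⊕ (Fin f)) F) *
        MvPolynomial.X (Sum.inr j))
  let v : (Fin f ⊕ Fin f ⊕ Fin f) → MvPolynomial (Fin f ⊕ Fin f) F ⧸ I :=
    Sum.elim (fun j => Ideal.Quotient.mk I (MvPolynomial.X (Sum.inl j)))
      (Sum.elim (fun j => Ideal.Quotient.mk I (MvPolynomial.X (Sum.inr j))) fun _ => 0)
  let ℓ : L →ₗ[F] MvPolynomial (Fin f ⊕ Fin f) F ⧸ I := B.constr F v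
  have hℓb : ∀ k, ℓ (B k) = v k := fun k => B.constr_basis F v k
  have hℓe : ∀ j, ℓ (e j) = Ideal.Quotient.mk I (MvPolynomial.X (Sum.inl j)) := fun j => by
    rw [← hBe j, hℓb]; rfl
  have hℓf : ∀ j, ℓ (fv j) = Ideal.Quotient.mk I (MvPolynomial.X (Sum.inr j)) := fun j => by
    rw [← hBf j, hℓb]; rfl
  have hℓh : ∀ j, ℓ (h j) = 0 := fun j => by rw [← hBh j, hℓb]; rfl
  have hbrkt : ∀ x y : L, ℓ ⁅x, y⁆ = 0 := by
    have key : ∀ i j, ℓ ⁅B i, B j⁆ = 0 := by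
      intro i j
      obtain i | i | i := i <;> obtain j | j | j := j
      · rw [hBe, hBe, hee, map_zero]
      · rw [hBe, hBf]
        by_cases hij : i = j
        · subst hij; rw [hef, hℓh]
        · rw [hef' i j hij, map_zero]
      · rw [hBe, hBh, ← lie_skew, hhe, neg_zero, map_zero]
      · rw [hBf, hBe, ← lie_skew]
        by_cases hij : j = i
        · subst hij; rw [hef, map_neg, hℓh, neg_zero]
        · rw [hef' j i hij, neg_zero, map_zero]
      · rw [hBf, hBf, hff, map_zero]
      · rw [hBf, hBh, ← lie_skew, hhf, neg_zero, map_zero]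
      · rw [hBh, hBe, hhe, map_zero]
      · rw [hBh, hBf, hhf, map_zero]
      · rw [hBh, hBh, hhh, map_zero]
    intro x y
    let T : L →ₗ[F] L →ₗ[F] MvPolynomial (Fin f ⊕ Fin f) F ⧸ I :=
      LinearMap.mk₂ F (fun x y => ℓ ⁅x, y⁆)
        (fun m n p => by show ℓ ⁅m + n, p⁆ = ℓ ⁅m, p⁆ + ℓ ⁅n, p⁆; rw [add_lie, map_add])
        (fun c m n => by show ℓ ⁅c • m, n⁆ = c • ℓ ⁅m, n⁆; rw [smul_lie, map_smul])
        (fun m n p => by show ℓ ⁅m, n + p⁆ = ℓ ⁅m, n⁆ + ℓ ⁅m, p⁆; rw [lie_add, map_add])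
        (fun c m n => by show ℓ ⁅m, c • n⁆ = c • ℓ ⁅m, n⁆; rw [lie_smul, map_smul])
    have hT : T = 0 := by
      apply B.ext; intro i
      apply B.ext; intro j
      show ℓ ⁅B i, B j⁆ = (0 : L →ₗ[F] L →ₗ[F] _) (B i) (B j)
      rw [key i j]; simp
    have h1 : T x y = 0 := by rw [hT]; rfl
    exact h1
  let φ : L →ₗ⁅F⁆ MvPolynomial (Fin f ⊕ Fin f) F ⧸ I :=
    { ℓ with
      map_lie' := by
        intro x y
        show ℓ ⁅x, y⁆ = ⁅ℓ x, ℓ y⁆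
        rw [hbrkt, LieRing.of_associative_ring_bracket, mul_comm, sub_self] }
  let Φ : UniversalEnvelopingAlgebra F L →ₐ[F] MvPolynomial (Fin f ⊕ Fin f) F ⧸ I :=
    UniversalEnvelopingAlgebra.lift F φ
  have hΦι : ∀ x : L, Φ (UniversalEnvelopingAlgebra.ι F x) = ℓ x := fun x =>
    UniversalEnvelopingAlgebra.lift_ι_apply F φ x
  let E : Fin f → UniversalEnvelopingAlgebra F L := fun j => UniversalEnvelopingAlgebra.ι F (e j)
  let Fw : Fin f → UniversalEnvelopingAlgebra F L := fun j => UniversalEnvelopingAlgebra.ι F (fv j)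
  let H : Fin f → UniversalEnvelopingAlgebra F L := fun j => UniversalEnvelopingAlgebra.ι F (h j)
  let J : Ideal (UniversalEnvelopingAlgebra F L) :=
    twoSidedSpan ((Set.range fun j : Fin f => E j * Fw j) ∪ (Set.range fun j : Fin f => H j))
  have hJef : ∀ (j : Fin f) (u w : UniversalEnvelopingAlgebra F L), u * (E j * Fw j) * w ∈ J :=
    fun j u w => Ideal.subset_span ⟨E j * Fw j, Or.inl ⟨j, rfl⟩, u, w, rfl⟩
  have hJh : ∀ (j : Fin f) (u w : UniversalEnvelopingAlgebra F L), u * H j * w ∈ J :=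
    fun j u w => Ideal.subset_span ⟨H j, Or.inr ⟨j, rfl⟩, u, w, rfl⟩
  have hJr : ∀ x ∈ J, ∀ r : UniversalEnvelopingAlgebra F L, x * r ∈ J := by
    intro x hx r
    refine Submodule.span_induction (p := fun x _ => x * r ∈ J) ?_ ?_ ?_ ?_ hx
    · rintro x ⟨a, ha, u, w, rfl⟩
      exact Ideal.subset_span ⟨a, ha, u, w * r, by rw [mul_assoc (u * a)]⟩
    · simp
    · intro x y _ _ hxr hyr; rw [add_mul]; exact J.add_mem hxr hyr
    · intro c x _ hxr; rw [smul_mul_assoc]; exact J.smul_mem c hxr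
  have hcommL : ∀ x y : L, ⁅x, y⁆ = (0 : L) →
      Commute (UniversalEnvelopingAlgebra.ι F x) (UniversalEnvelopingAlgebra.ι F y) := by
    intro x y hxy
    have hmap := (UniversalEnvelopingAlgebra.ι F (L := L)).map_lie (x := x) (y := y)
    rw [hxy, map_zero, LieRing.of_associative_ring_bracket] at hmap
    exact sub_eq_zero.mp hmap.symm
  have hEE : ∀ i j, Commute (E i) (E j) := fun i j => hcommL _ _ (hee i j)
  have hFF : ∀ i j, Commute (Fw i) (Fw j) := fun i j => hcommL _ _ (hff i j)
  have hEF' : ∀ i j, i ≠ j → Commute (E i) (Fw j) := fun i j hij => hcommL _ _ (hef' i j hij)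
  have hFE1 : ∀ j, Fw j * E j = E j * Fw j - H j := by
    intro j
    have hmap := (UniversalEnvelopingAlgebra.ι F (L := L)).map_lie (x := e j) (y := fv j)
    rw [hef j, LieRing.of_associative_ring_bracket] at hmap
    calc Fw j * E j = E j * Fw j - (E j * Fw j - Fw j * E j) := by abel
      _ = E j * Fw j - H j := by rw [← hmap]
  let g : ((Fin f ⊕ Fin f) →₀ ℕ) → UniversalEnvelopingAlgebra F L := auxG E Fw
  let Msub : Submodule F (UniversalEnvelopingAlgebra F L) :=
    Submodule.restrictScalars F J ⊔ Submodule.span F (Set.range g)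
  have hJM : ∀ x ∈ J, x ∈ Msub := fun x hx => Submodule.mem_sup_left hx
  have hgM : ∀ m, g m ∈ Msub := fun m => Submodule.mem_sup_right (Submodule.subset_span ⟨m, rfl⟩)
  have hEgM : ∀ i m, E i * g m ∈ Msub := fun i m => by
    rw [show E i * g m = auxG E Fw (m + Finsupp.single (Sum.inl i) 1) from auxE_mul_G hEE i m]
    exact hgM _
  have hFgM : ∀ i m, Fw i * g m ∈ Msub := fun i m => by
    obtain ⟨w, hw, hrel⟩ := auxFv_mul_G (H := H) hEE hFF hEF' hJh hJr hFE1 i m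
    rw [show Fw i * g m = auxG E Fw (m + Finsupp.single (Sum.inr i) 1) + w from hrel]
    exact Msub.add_mem (hgM _) (hJM w hw)
  have hHgM : ∀ i m, H i * g m ∈ Msub := fun i m => hJM _ (by
    have := hJh i 1 (g m); rwa [one_mul] at this)
  have hι_mul : ∀ (x : L), ∀ y ∈ Msub, UniversalEnvelopingAlgebra.ι F x * y ∈ Msub := by
    intro x y hy
    have hx : x ∈ Submodule.span F (Set.range (B : (Fin f ⊕ Fin f ⊕ Fin f) → L)) := by
      rw [Module.Basis.span_eq]; exact Submodule.mem_top
    refine Submodule.span_induction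
      (p := fun x _ => UniversalEnvelopingAlgebra.ι F x * y ∈ Msub) ?_ ?_ ?_ ?_ hx
    · rintro x' ⟨k, rfl⟩
      obtain ⟨yJ, hyJ, yg, hyg, hsum⟩ := Submodule.mem_sup.mp hy
      rw [← hsum, mul_add]
      refine Msub.add_mem (hJM _ (Ideal.mul_mem_left J _ hyJ)) ?_
      refine Submodule.span_induction
        (p := fun z _ => UniversalEnvelopingAlgebra.ι F (B k) * z ∈ Msub) ?_ ?_ ?_ ?_ hyg
      · rintro z ⟨m, rfl⟩
        obtain k | k | k := k
        · rw [hBe]; exact hEgM k m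
        · rw [hBf]; exact hFgM k m
        · rw [hBh]; exact hHgM k m
      · beta_reduce; rw [mul_zero]; exact Msub.zero_mem
      · intro a b _ _ ha hb; beta_reduce at ha hb ⊢; rw [mul_add]; exact Msub.add_mem ha hb
      · intro c z _ hz; beta_reduce at hz ⊢; rw [mul_smul_comm]; exact Msub.smul_mem c hz
    · beta_reduce; rw [map_zero, zero_mul]; exact Msub.zero_mem
    · intro a b _ _ ha hb; beta_reduce at ha hb ⊢; rw [map_add, add_mul]
      exact Msub.add_mem ha hb
    · intro c z _ hz; beta_reduce at hz ⊢; rw [map_smul, smul_mul_assoc]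
      exact Msub.smul_mem c hz
  have h1M : (1 : UniversalEnvelopingAlgebra F L) ∈ Msub := by
    have := hgM 0
    rwa [show g 0 = 1 from auxG_zero] at this
  have hmkSurj : Function.Surjective (UniversalEnvelopingAlgebra.mkAlgHom F L) :=
    RingCon.mkₐ_surjective _
  have hmulM : ∀ x : UniversalEnvelopingAlgebra F L, ∀ y ∈ Msub, x * y ∈ Msub := by
    intro x
    obtain ⟨t, rfl⟩ := hmkSurj x
    induction t using TensorAlgebra.induction with
    | algebraMap r =>
      intro y hy
      rw [AlgHom.commutes, ← Algebra.smul_def]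
      exact Msub.smul_mem r hy
    | ι x =>
      intro y hy
      rw [show (UniversalEnvelopingAlgebra.mkAlgHom F L) (TensorAlgebra.ι F x)
          = UniversalEnvelopingAlgebra.ι F x from (UniversalEnvelopingAlgebra.ι_apply F x).symm]
      exact hι_mul x y hy
    | mul a b ha hb =>
      intro y hy
      rw [map_mul, mul_assoc]
      exact ha _ (hb y hy)
    | add a b ha hb =>
      intro y hy
      rw [map_add, add_mul]
      exact Msub.add_mem (ha y hy) (hb y hy)
  have hMtop : ∀ x : UniversalEnvelopingAlgebra F L, x ∈ Msub := fun x => by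
    have := hmulM x 1 h1M
    rwa [mul_one] at this
  have hE : ∀ j, Φ (E j) = Ideal.Quotient.mk I (MvPolynomial.X (Sum.inl j)) :=
    fun j => (hΦι (e j)).trans (hℓe j)
  have hFwv : ∀ j, Φ (Fw j) = Ideal.Quotient.mk I (MvPolynomial.X (Sum.inr j)) :=
    fun j => (hΦι (fv j)).trans (hℓf j)
  have hΦg : ∀ m, Φ (g m) = Ideal.Quotient.mk I (MvPolynomial.monomial m 1) := by
    intro m
    show Φ (auxG E Fw m) = _
    unfold auxG
    rw [map_mul, auxMap_PE Φ, auxMap_PE Φ]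
    rw [show (fun j => Φ (E j)) = fun j => Ideal.Quotient.mk I (MvPolynomial.X (Sum.inl j)) from funext hE]
    rw [show (fun j => Φ (Fw j)) = fun j => Ideal.Quotient.mk I (MvPolynomial.X (Sum.inr j)) from funext hFwv]
    rw [auxPE_eq_prod, auxPE_eq_prod]
    have hmkprod : ∀ (w : Fin f → MvPolynomial (Fin f ⊕ Fin f) F) (a : Fin f → ℕ),
        (∏ j, (Ideal.Quotient.mk I (w j)) ^ a j) = Ideal.Quotient.mk I (∏ j, w j ^ a j) := by
      intro w a
      rw [map_prod]
      exact Finset.prod_congr rfl fun j _ => (map_pow _ _ _).symm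
    rw [hmkprod, hmkprod, ← map_mul]
    congr 1
    rw [← Fintype.prod_sum_type (fun k => (MvPolynomial.X k : MvPolynomial (Fin f ⊕ Fin f) F) ^ m k)]
    rw [← MvPolynomial.prod_X_pow_eq_monomial]
    exact (Finset.prod_subset (Finset.subset_univ _) (fun k _ hk => by
      rw [Finsupp.notMem_support_iff.mp hk, pow_zero])).symm
  have hJker : ∀ x ∈ J, Φ x = 0 := by
    intro x hx
    refine Submodule.span_induction (p := fun x _ => Φ x = 0) ?_ ?_ ?_ ?_ hx
    · rintro x ⟨a, ha, u, w, rfl⟩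
      have ha0 : Φ a = 0 := by
        rcases ha with ⟨j, rfl⟩ | ⟨j, rfl⟩
        · rw [map_mul, hE, hFwv, ← map_mul]
          exact Ideal.Quotient.eq_zero_iff_mem.mpr (Ideal.subset_span ⟨j, rfl⟩)
        · exact (hΦι (h j)).trans (hℓh j)
      rw [map_mul, map_mul, ha0, mul_zero, zero_mul]
    · exact map_zero Φ
    · intro a b _ _ h1 h2; rw [map_add, h1, h2, add_zero]
    · intro c z _ h1; rw [smul_eq_mul, map_mul, h1, mul_zero]
  have hsm : ∀ (r : F) (q : MvPolynomial (Fin f ⊕ Fin f) F),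
      Ideal.Quotient.mk I (r • q) = r • Ideal.Quotient.mk I q := by
    intro r q
    rw [← Ideal.Quotient.mkₐ_eq_mk F I]
    exact map_smul (Ideal.Quotient.mkₐ F I) r q
  have hkerJ : ∀ x, Φ x = 0 → x ∈ J := by
    intro x hx0
    obtain ⟨yJ, hyJ, z, hz, hsum⟩ := Submodule.mem_sup.mp (hMtop x)
    have hyJ' : yJ ∈ J := hyJ
    obtain ⟨c, hc⟩ := Finsupp.mem_span_range_iff_exists_finsupp.mp hz
    have hΦz : Φ z = 0 := by
      have h2 : Φ x = Φ yJ + Φ z := by rw [← hsum, map_add]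
      rw [hx0, hJker yJ hyJ', zero_add] at h2
      exact h2.symm
    have hΦz' : Φ z = Ideal.Quotient.mk I (c.sum fun m r => MvPolynomial.monomial m r) := by
      rw [← hc, Finsupp.sum, Finsupp.sum, map_sum, map_sum]
      refine Finset.sum_congr rfl fun m _ => ?_
      rw [map_smul, hΦg, ← hsm, MvPolynomial.smul_monomial, smul_eq_mul, mul_one]
    have hpI : (c.sum fun m r => MvPolynomial.monomial m r) ∈ I := by
      refine Ideal.Quotient.eq_zero_iff_mem.mp ?_
      rw [← hΦz']
      exact hΦz
    have hgen : (Set.range fun j : Fin f =>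
          (MvPolynomial.X (Sum.inl j) : MvPolynomial (Fin f ⊕ Fin f) F) * MvPolynomial.X (Sum.inr j))
        = (fun s => MvPolynomial.monomial s (1 : F)) ''
            (Set.range fun j : Fin f =>
              Finsupp.single (Sum.inl j) 1 + Finsupp.single (Sum.inr j) 1) := by
      rw [← Set.range_comp]
      refine congrArg Set.range (funext fun j => ?_)
      show (MvPolynomial.X (Sum.inl j) : MvPolynomial (Fin f ⊕ Fin f) F) * MvPolynomial.X (Sum.inr j)
          = MvPolynomial.monomial (Finsupp.single (Sum.inl j) 1 + Finsupp.single (Sum.inr j) 1) (1 : F)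
      rw [MvPolynomial.X, MvPolynomial.X, MvPolynomial.monomial_mul, mul_one]
    have hdvd := MvPolynomial.mem_ideal_span_monomial_image.mp (by rw [← hgen]; exact hpI)
    have hcoeff : ∀ m', MvPolynomial.coeff m' (c.sum fun m r => MvPolynomial.monomial m r) = c m' := by
      intro m'
      rw [Finsupp.sum, MvPolynomial.coeff_sum]
      by_cases hm : m' ∈ c.support
      · rw [Finset.sum_eq_single m' (fun b _ hb => by
            rw [MvPolynomial.coeff_monomial, if_neg hb]) (fun hm' => absurd hm hm')]
        rw [MvPolynomial.coeff_monomial, if_pos rfl]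
      · rw [Finsupp.notMem_support_iff.mp hm]
        exact Finset.sum_eq_zero fun b hb => by
          rw [MvPolynomial.coeff_monomial, if_neg (fun hbm : b = m' => hm (by rw [← hbm]; exact hb))]
    have hzJ : z ∈ J := by
      rw [← hc, Finsupp.sum]
      refine Submodule.sum_mem J fun m hm => ?_
      rw [Algebra.smul_def]
      refine Ideal.mul_mem_left J _ ?_
      have hmp : m ∈ (c.sum fun m r => MvPolynomial.monomial m r).support := by
        rw [MvPolynomial.mem_support_iff, hcoeff]
        exact Finsupp.mem_support_iff.mp hm
      obtain ⟨d, ⟨j, rfl⟩, hle⟩ := hdvd m hmp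
      have hle' := Finsupp.le_def.mp hle
      have h1 : m (Sum.inl j) ≠ 0 := by
        have := hle' (Sum.inl j)
        simp [Finsupp.single_apply] at this
        omega
      have h2 : m (Sum.inr j) ≠ 0 := by
        have := hle' (Sum.inr j)
        simp [Finsupp.single_apply] at this
        omega
      exact auxG_mem hEE hFF hJef m j h1 h2
    rw [← hsum]
    exact J.add_mem hyJ' hzJ
  have hsurj : Function.Surjective Φ := by
    intro q
    obtain ⟨p, rfl⟩ := Ideal.Quotient.mk_surjective q
    induction p using MvPolynomial.induction_on with
    | C a =>
      refine ⟨algebraMap F _ a, ?_⟩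
      rw [AlgHom.commutes]
      rfl
    | add p q hp hq =>
      obtain ⟨xp, hxp⟩ := hp
      obtain ⟨xq, hxq⟩ := hq
      exact ⟨xp + xq, by rw [map_add, hxp, hxq, map_add]⟩
    | mul_X p k hp =>
      obtain ⟨xp, hxp⟩ := hp
      obtain k | k := k
      · exact ⟨xp * E k, by rw [map_mul, hxp, hE, ← map_mul]⟩
      · exact ⟨xp * Fw k, by rw [map_mul, hxp, hFwv, ← map_mul]⟩
  refine ⟨Φ, hsurj, fun j => ?_, fun j => ?_, ?_⟩
  · rw [hΦι, hℓe]
  · rw [hΦι, hℓf]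
  · apply le_antisymm
    · intro x hx
      exact hkerJ x (RingHom.mem_ker.mp hx)
    · intro x hx
      exact RingHom.mem_ker.mpr (hJker x hx)
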